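/- Let g:(0,∞)→(0,∞) be increasing and regularly varying at infinity with some index α ≥ 0, satisfying g(r)/log r → ∞, and suppose h(t) → ∞ as t → ∞ where h(t) is the largest h with t/h ≥ g(h) − log t. Then for all sufficiently large t, t/h(t) ≤ 2(g(h(t)) − log t). -/

import Mathlib

open Filter

/-- If `g` is increasing, regularly varying at infinity with index `α ≥ 0`,
`g(r)/log r → ∞`, and `h(t) → ∞` where `h(t)` is the largest `h > 0` with
`t/h ≥ g(h) - log t`, then eventually `t/h(t) ≤ 2 (g(h(t)) - log t)`. -/
theorem stmt1 (g h : ℝ → ℝ) (α : ℝ) (hα : 0 ≤ α)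
    (hg_pos : ∀ r > 0, 0 < g r)
    (hg_mono : MonotoneOn g (Set.Ioi (0 : ℝ)))
    (hRV : ∀ l : ℝ, 0 < l →
      Tendsto (fun r => g (l * r) / g r) atTop (nhds (l ^ α)))
    (hglog : Tendsto (fun r => g r / Real.log r) atTop atTop)
    (hh : ∀ᶠ t in atTop,
      IsGreatest {x : ℝ | 0 < x ∧ g x - Real.log t ≤ t / x} (h t))
    (hhtop : Tendsto h atTop atTop) :
    ∀ᶠ t in atTop, t / h t ≤ 2 * (g (h t) - Real.log t) := by
  -- choose l ∈ (1, 5/4) with l ^ α < 9/8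
  obtain ⟨l, hlα, hl1, hl54⟩ : ∃ l : ℝ, l ^ α < 9/8 ∧ 1 < l ∧ l < 5/4 := by
    have hcont : ContinuousAt (fun x : ℝ => x ^ α) 1 :=
      Real.continuousAt_rpow_const 1 α (Or.inl one_ne_zero)
    have htend : Tendsto (fun x : ℝ => x ^ α)
        (nhdsWithin 1 (Set.Ioo 1 (5/4))) (nhds 1) := by
      have := hcont.tendsto
      rw [Real.one_rpow] at this
      exact this.mono_left nhdsWithin_le_nhds
    have hev : ∀ᶠ x in nhdsWithin (1:ℝ) (Set.Ioo 1 (5/4)), x ^ α < 9/8 :=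
      htend.eventually_lt_const (by norm_num)
    have hmem : ∀ᶠ x in nhdsWithin (1:ℝ) (Set.Ioo 1 (5/4)),
        x ∈ Set.Ioo (1:ℝ) (5/4) := eventually_mem_nhdsWithin
    have hne : (nhdsWithin (1:ℝ) (Set.Ioo 1 (5/4))).NeBot :=
      left_nhdsWithin_Ioo_neBot (by norm_num)
    obtain ⟨x, hx1, hx2⟩ := (hev.and hmem).exists
    exact ⟨x, hx1, hx2.1, hx2.2⟩
  have hl0 : (0:ℝ) < l := lt_trans one_pos hl1
  -- eventual properties in r
  have hev1 : ∀ᶠ r in atTop, g (l * r) / g r < 5/4 :=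
    (hRV l hl0).eventually_lt_const (by linarith)
  have hev2 : ∀ᶠ r in atTop, (4:ℝ) ≤ g r / Real.log r :=
    hglog.eventually_ge_atTop 4
  have hP : ∀ᶠ r in atTop,
      g (l * r) < 5/4 * g r ∧ 4 * Real.log r ≤ g r ∧ 1 < r := by
    filter_upwards [hev1, hev2, eventually_ge_atTop (3:ℝ)] with r h1 h2 h3
    have hr1 : (1:ℝ) < r := by linarith
    have hlogr : 0 < Real.log r := Real.log_pos hr1
    have hgr : 0 < g r := hg_pos r (by linarith)
    refine ⟨?_, ?_, hr1⟩
    · have := (div_lt_iff₀ hgr).mp h1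
      linarith
    · have := (le_div_iff₀ hlogr).mp h2
      linarith
  have hPt := hhtop.eventually hP
  -- eventually 4 (log t)^2 < t
  have hlogt : ∀ᶠ t : ℝ in atTop, 4 * (Real.log t)^2 < t := by
    have hb := (isLittleO_log_rpow_atTop (by norm_num : (0:ℝ) < 1/2)).bound
      (by norm_num : (0:ℝ) < 1/4)
    filter_upwards [hb, eventually_gt_atTop (1:ℝ)] with t ht ht1
    have ht0 : (0:ℝ) < t := by linarith
    have hsq : (t ^ (1/2:ℝ))^(2:ℕ) = t := by
      rw [← Real.rpow_natCast (t ^ (1/2:ℝ)) 2, ← Real.rpow_mul ht0.le]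
      norm_num
    have hL0 : 0 < Real.log t := Real.log_pos ht1
    have hr0 : 0 < t ^ (1/2:ℝ) := Real.rpow_pos_of_pos ht0 _
    rw [Real.norm_eq_abs, Real.norm_eq_abs, abs_of_pos hL0, abs_of_pos hr0] at ht
    nlinarith [hsq, ht, hL0, hr0]
  filter_upwards [hh, hPt, hlogt, eventually_gt_atTop (1:ℝ)] with t hgt hP hlt ht1
  obtain ⟨⟨hH0, hHle⟩, hmax⟩ := hgt
  obtain ⟨hQ1, hQ2, hH1⟩ := hP
  by_contra hcon
  push_neg at hcon
  set H := h t with hHdef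
  set A := g H with hA
  set L := Real.log t with hL
  set s := g (l * H) with hs
  have hH0' : (0:ℝ) < H := hH0
  have ht0 : (0:ℝ) < t := by linarith
  have hApos : 0 < A := hg_pos H hH0'
  -- maximality at l*H
  have hlH : t / (l * H) < s - L := by
    by_contra hx
    push_neg at hx
    have hmem : l * H ∈ {x : ℝ | 0 < x ∧ g x - Real.log t ≤ t / x} :=
      ⟨mul_pos hl0 hH0', hx⟩
    have := hmax hmem
    nlinarith
  set u := t / H with hu
  have huH : u * H = t := div_mul_cancel₀ t hH0'.ne'
  have hupos : 0 < u := div_pos ht0 hH0'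
  have hdiv : t / (l * H) = u / l := by
    rw [hu, mul_comm, ← div_div]
  rw [hdiv] at hlH
  have hlH' : u < l * (s - L) := by
    have := (div_lt_iff₀ hl0).mp hlH
    linarith [this]
  have hsL : 0 < s - L := lt_trans (div_pos hupos hl0) hlH
  -- u < 5/6 A
  have hu56 : u < 5/6 * A := by
    nlinarith [mul_nonneg (by linarith : (0:ℝ) ≤ 5/4 - l) hsL.le]
  -- L > 7/12 A
  have hL712 : 7/12 * A < L := by nlinarith
  have hL0 : 0 < L := by nlinarith
  -- 2 log H < L
  have hlogH : 2 * Real.log H < L := by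
    have : Real.log H ≤ A / 4 := by linarith
    linarith
  -- H^2 < t
  have hH2 : H^2 < t := by
    have hexp : Real.exp (2 * Real.log H) < Real.exp L :=
      Real.exp_lt_exp.mpr hlogH
    rw [two_mul, Real.exp_add, Real.exp_log hH0', Real.exp_log ht0] at hexp
    rw [pow_two]
    exact hexp
  have hHu : H < u := by
    have h1 : H * H < u * H := by rw [pow_two] at hH2; linarith
    exact lt_of_mul_lt_mul_right h1 hH0'.le
  have hu2L : u < 2 * L := by linarith
  -- contradiction
  have p1 : u * H < u * u := mul_lt_mul_of_pos_left hHu hupos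
  have p2 : u * u < u * (2 * L) := mul_lt_mul_of_pos_left hu2L hupos
  have p3 : u * (2 * L) < 2 * L * (2 * L) := mul_lt_mul_of_pos_right hu2L (by linarith)
  have p4 : 2 * L * (2 * L) = 4 * L ^ 2 := by ring
  linarith
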